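/- Let f : [a,b] ⊆ [0,∞) → [0,∞) be continuous, quasi-convex, and monotone increasing, 0 ≤ a < b, p, q > 0. Then ∫_a^b (x-a)^p (b-x)^q f(x) f(a+b-x) dx ≤ (b-a)^{p+q+1} f(b)^2 B(p+1, q+1). -/

import Mathlib

open MeasureTheory Set intervalIntegral

noncomputable def eulerBeta (m n : ℝ) : ℝ := ∫ t in (0:ℝ)..1, t ^ (m - 1) * (1 - t) ^ (n - 1)

lemma weight_cont (a b p q : ℝ) (hp : 0 < p) (hq : 0 < q) :
    Continuous fun x : ℝ => (x - a) ^ p * (b - x) ^ q := by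
  exact ((Real.continuous_rpow_const hp.le).comp (continuous_id.sub continuous_const)).mul
    ((Real.continuous_rpow_const hq.le).comp (continuous_const.sub continuous_id))

lemma weight_int (a b p q : ℝ) (hab : a < b) (hp : 0 < p) (hq : 0 < q) :
    ∫ x in a..b, (x - a) ^ p * (b - x) ^ q
      = (b - a) ^ (p + q + 1) * eulerBeta (p + 1) (q + 1) := by
  have hderiv : ∀ t ∈ uIcc (0:ℝ) 1, HasDerivAt (fun t : ℝ => a + t * (b - a)) (b - a) t := by
    intro t _
    simpa [mul_comm] using ((hasDerivAt_id t).const_mul (b - a)).const_add a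
  have key := integral_comp_smul_deriv hderiv continuousOn_const
    (weight_cont a b p q hp hq)
  simp only [smul_eq_mul, Function.comp] at key
  have h0 : a + 0 * (b - a) = a := by ring
  have h1 : a + 1 * (b - a) = b := by ring
  rw [h0, h1] at key
  rw [← key]
  rw [eulerBeta]
  have hcong : ∀ t ∈ uIcc (0:ℝ) 1,
      (b - a) * ((a + t * (b - a) - a) ^ p * (b - (a + t * (b - a))) ^ q)
        = (b - a) ^ (p + q + 1) * (t ^ (p + 1 - 1) * (1 - t) ^ (q + 1 - 1)) := by
    intro t ht
    rw [uIcc_of_le zero_le_one] at ht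
    obtain ⟨ht0, ht1⟩ := ht
    have e1 : a + t * (b - a) - a = t * (b - a) := by ring
    have e2 : b - (a + t * (b - a)) = (1 - t) * (b - a) := by ring
    have hba : (0:ℝ) ≤ b - a := by linarith
    rw [e1, e2, Real.mul_rpow ht0 hba, Real.mul_rpow (by linarith) hba]
    have : (b - a) ^ (p + q + 1) = (b - a) ^ p * (b - a) ^ q * (b - a) := by
      rw [← Real.rpow_add (by linarith) p q, ← Real.rpow_add_one (by linarith)]
    rw [this]
    simp only [add_sub_cancel_right]
    ring
  rw [integral_congr hcong, intervalIntegral.integral_const_mul]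

theorem cor_2_5_inc (f : ℝ → ℝ) (a b : ℝ) (ha : 0 ≤ a) (hab : a < b)
    (hf : ContinuousOn f (Icc a b)) (hnn : ∀ x ∈ Icc a b, 0 ≤ f x)
    (hq : ∀ x ∈ Icc a b, ∀ y ∈ Icc a b, ∀ α : ℝ, 0 ≤ α → α ≤ 1 →
      f (α * x + (1 - α) * y) ≤ max (f x) (f y))
    (hmono : MonotoneOn f (Icc a b))
    (p q : ℝ) (hp : 0 < p) (hq' : 0 < q) :
    ∫ x in a..b, (x - a) ^ p * (b - x) ^ q * (f x * f (a + b - x)) ≤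
      (b - a) ^ (p + q + 1) * f b ^ 2 * eulerBeta (p + 1) (q + 1) := by
  have hmaps : MapsTo (fun x => a + b - x) (Icc a b) (Icc a b) := by
    intro x hx; simp only [mem_Icc] at hx ⊢; constructor <;> linarith [hx.1, hx.2]
  have hcont2 : ContinuousOn (fun x => f x * f (a + b - x)) (Icc a b) :=
    hf.mul (hf.comp (continuous_const.sub continuous_id).continuousOn hmaps)
  have hwc := weight_cont a b p q hp hq'
  have hint1 : IntervalIntegrable
      (fun x => (x - a) ^ p * (b - x) ^ q * (f x * f (a + b - x))) volume a b := by
    apply ContinuousOn.intervalIntegrable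
    rw [uIcc_of_le hab.le]
    exact hwc.continuousOn.mul hcont2
  have hint2 : IntervalIntegrable
      (fun x => (x - a) ^ p * (b - x) ^ q * f b ^ 2) volume a b :=
    (hwc.mul continuous_const).intervalIntegrable a b
  have hbd : ∀ x ∈ Icc a b,
      (x - a) ^ p * (b - x) ^ q * (f x * f (a + b - x))
        ≤ (x - a) ^ p * (b - x) ^ q * f b ^ 2 := by
    intro x hx
    obtain ⟨hx1, hx2⟩ := mem_Icc.mp hx
    have h1 : f x ≤ f b := hmono hx (right_mem_Icc.mpr hab.le) hx2
    have h2 : f (a + b - x) ≤ f b := hmono (hmaps hx) (right_mem_Icc.mpr hab.le) (by show a + b - x ≤ b; linarith)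
    have hw : 0 ≤ (x - a) ^ p * (b - x) ^ q :=
      mul_nonneg (Real.rpow_nonneg (by linarith) _) (Real.rpow_nonneg (by linarith) _)
    apply mul_le_mul_of_nonneg_left _ hw
    rw [sq]
    exact mul_le_mul h1 h2 (hnn _ (hmaps hx)) (hnn _ (right_mem_Icc.mpr hab.le))
  calc ∫ x in a..b, (x - a) ^ p * (b - x) ^ q * (f x * f (a + b - x))
      ≤ ∫ x in a..b, (x - a) ^ p * (b - x) ^ q * f b ^ 2 :=
        integral_mono_on hab.le hint1 hint2 hbd
    _ = (∫ x in a..b, (x - a) ^ p * (b - x) ^ q) * f b ^ 2 := integral_mul_const _ _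
    _ = (b - a) ^ (p + q + 1) * f b ^ 2 * eulerBeta (p + 1) (q + 1) := by
        rw [weight_int a b p q hab hp hq']; ring
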